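/- For every integer r ≥ 2 one has the identity of formal power series in u over ℤ[q]: q^r·P_{2r}(q,u) = qu·P_{2r-3}(q,qu) + q^{r+2}u²·P_{2r}(q,q²u). Equivalently, comparing coefficients of u^s: q^r·p_{2s,2r}(q) = q^s·p_{2s-3,2r-3}(q) + q^{r+2s-2}·p_{2s-4,2r}(q) for all s ≥ 2, both right-hand terms with negative first index being interpreted as 0. -/

import Mathlib

open scoped PowerSeries

/-- The polynomials `p_{s,r}(q) ∈ ℤ[q]` (the graded multiplicities
`[D(2,sω) : D(3,rω)]_q`): `p_{0,0} = p_{1,1} = p_{2,2} = 1`; `p_{s,r} = 0` whenever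
`r > s`, or `s - r` is odd, or `s ≤ 2` and `(s,r) ∉ {(0,0),(1,1),(2,2)}`; and for
`s ≥ 3` with `r ≤ s` and `s - r` even, writing `s = 2s₁ + s₀` with `s₀ ∈ {0,1}`,
`p_{s,r} = q^{(s-r)/2} p_{s-3,r-3} + q^{(s₁+s₀-1)(2-s₀)} p_{s-4+2s₀,r}` if `r ≥ 3`, and
`p_{s,r} = q^{(s₁+s₀-1)(2-s₀)} p_{s-4+2s₀,r}` if `0 ≤ r ≤ 2`. -/
noncomputable def pp : ℕ → ℕ → Polynomial ℤ
  | 0, r => if r = 0 then 1 else 0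
  | 1, r => if r = 1 then 1 else 0
  | 2, r => if r = 2 then 1 else 0
  | (s + 3), r =>
    if (s + 3) < r ∨ (s + 3) % 2 ≠ r % 2 then 0
    else
      (if 3 ≤ r then Polynomial.X ^ (((s + 3) - r) / 2) * pp s (r - 3) else 0)
        + Polynomial.X ^ (((s + 3) / 2 + (s + 3) % 2 - 1) * (2 - (s + 3) % 2))
            * pp ((s + 3) + 2 * ((s + 3) % 2) - 4) r
  termination_by s _ => s
  decreasing_by
  · omega
  · omega

/-- The generating series `P_m(q,u)`: for `m` even, `P_m(q,u) = Σ_{s≥0} p_{2s,m} u^s`;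
for `m` odd, `P_m(q,u) = Σ_{s≥0} p_{2s+1,m} u^{s+1}`.  A formal power series in `u` with
coefficients in `ℤ[q]`. -/
noncomputable def Pser (m : ℕ) : PowerSeries (Polynomial ℤ) :=
  PowerSeries.mk fun n =>
    if m % 2 = 0 then pp (2 * n) m else if n = 0 then 0 else pp (2 * n - 1) m

/-- `thetaSubst a c` is the substituted partial theta series `Θ(a, c·u²) ∈ ℤ[q]⟦u⟧`,
i.e. `Σ_{s≥0} a^{s²} c^s u^{2s}`, where `Θ(q,u) = Σ_{s≥0} q^{s²}u^s`. -/
noncomputable def thetaSubst (a c : Polynomial ℤ) : PowerSeries (Polynomial ℤ) :=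
  PowerSeries.mk fun n => if n % 2 = 0 then a ^ ((n / 2) ^ 2) * c ^ (n / 2) else 0
lemma pp_zero_of_lt (s r : ℕ) (h : s < r) : pp s r = 0 := by
  match s with
  | 0 => rw [pp]; simp; omega
  | 1 => rw [pp]; simp; omega
  | 2 => rw [pp]; simp; omega
  | s+3 => rw [pp]; rw [if_pos (Or.inl h)]

lemma coeff_id (r : ℕ) (hr : 2 ≤ r) (s : ℕ) (hs : 2 ≤ s) :
    Polynomial.X ^ r * pp (2 * s) (2 * r)
      = Polynomial.X ^ s * pp (2 * s - 3) (2 * r - 3)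
        + Polynomial.X ^ (r + 2 * s - 2) * pp (2 * s - 4) (2 * r) := by
  obtain ⟨k, rfl⟩ : ∃ k, s = k + 2 := ⟨s - 2, by omega⟩
  rw [show 2 * (k + 2) - 3 = 2 * k + 1 from by omega,
      show 2 * (k + 2) - 4 = 2 * k from by omega,
      show 2 * (k + 2) = (2 * k + 1) + 3 from by omega, pp]
  rw [show (2 * k + 1 + 3) % 2 = 0 from by omega,
      show (2 * k + 1 + 3) / 2 = k + 2 from by omega]
  by_cases h : k + 2 < r
  · rw [if_pos (by omega), pp_zero_of_lt (2 * k + 1) (2 * r - 3) (by omega),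
      pp_zero_of_lt (2 * k) (2 * r) (by omega)]
    simp
  · rw [if_neg (by omega), if_pos (by omega : 3 ≤ 2 * r),
      show 2 * k + 1 + 3 + 2 * 0 - 4 = 2 * k from by omega,
      show (2 * k + 1 + 3 - 2 * r) / 2 = k + 2 - r from by omega]
    rw [mul_add, ← mul_assoc, ← mul_assoc, ← pow_add, ← pow_add,
      show r + (k + 2 - r) = k + 2 from by omega,
      show r + (k + 2 + 0 - 1) * (2 - 0) = r + (2 * k + 1 + 3) - 2 from by omega]

theorem stmt13 (r : ℕ) (hr : 2 ≤ r) :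
    (PowerSeries.C (R := Polynomial ℤ) Polynomial.X ^ r * Pser (2 * r)
      = PowerSeries.C (R := Polynomial ℤ) Polynomial.X * PowerSeries.X
          * PowerSeries.rescale Polynomial.X (Pser (2 * r - 3))
        + PowerSeries.C (R := Polynomial ℤ) Polynomial.X ^ (r + 2) * PowerSeries.X ^ 2
            * PowerSeries.rescale (Polynomial.X ^ 2) (Pser (2 * r))) ∧
    ∀ s : ℕ, 2 ≤ s →
      Polynomial.X ^ r * pp (2 * s) (2 * r)
        = Polynomial.X ^ s * pp (2 * s - 3) (2 * r - 3)
          + Polynomial.X ^ (r + 2 * s - 2) * pp (2 * s - 4) (2 * r) := by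
  constructor
  · have hodd : (2 * r - 3) % 2 = 1 := by omega
    have hE : ∀ n, PowerSeries.coeff n (Pser (2 * r)) = pp (2 * n) (2 * r) := by
      intro n; simp [Pser, Nat.mul_mod_right]
    have hO : ∀ n, PowerSeries.coeff (n + 1) (Pser (2 * r - 3))
        = pp (2 * n + 1) (2 * r - 3) := by
      intro n
      simp only [Pser, PowerSeries.coeff_mk, hodd]
      rw [if_neg (by omega), if_neg (by omega), show 2 * (n + 1) - 1 = 2 * n + 1 from by omega]
    refine PowerSeries.ext fun n => ?_
    rw [map_add, ← map_pow, PowerSeries.coeff_C_mul, mul_assoc, PowerSeries.coeff_C_mul,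
      mul_assoc, ← map_pow, PowerSeries.coeff_C_mul,
      mul_comm (PowerSeries.X ^ 2), PowerSeries.coeff_mul_X_pow', hE]
    match n with
    | 0 =>
      rw [PowerSeries.coeff_zero_X_mul, if_neg (by omega),
        pp_zero_of_lt 0 (2 * r) (by omega)]
      simp
    | 1 =>
      rw [PowerSeries.coeff_succ_X_mul, if_neg (by omega), PowerSeries.coeff_rescale,
        pp_zero_of_lt 2 (2 * r) (by omega)]
      simp [Pser, hodd]
    | (m + 2) =>
      rw [PowerSeries.coeff_succ_X_mul, if_pos (by omega), PowerSeries.coeff_rescale,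
        PowerSeries.coeff_rescale, hO, show m + 2 - 2 = m from rfl, hE]
      have h := coeff_id r hr (m + 2) (by omega)
      rw [show 2 * (m + 2) - 3 = 2 * m + 1 from by omega,
        show 2 * (m + 2) - 4 = 2 * m from by omega,
        show r + 2 * (m + 2) - 2 = (r + 2) + 2 * m from by omega] at h
      rw [h]
      ring
  · exact coeff_id r hr
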